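/- Let F be a nonzero formal power series with complex coefficients that is algebraic over the field of rational functions ℂ(z), i.e. there exists a nonzero polynomial P(z,T) with coefficients in ℂ[z] such that P(z,F) = 0 in ℂ⟦z⟧. Then the following are equivalent: (1) F is root-rational, i.e. there exist an integer t ≥ 1 and polynomials A, B ∈ ℂ[z] with B ≠ 0 such that B·F^t = A in ℂ⟦z⟧; (2) F satisfies a first-order homogeneous linear differential equation over ℂ(z), i.e. there exist polynomials A, B ∈ ℂ[z] with B ≠ 0 such that B·F' = A·F, where F' is the formal derivative of F. -/

import Mathlib

open PowerSeries

namespace RRODE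



local notation "D" => PowerSeries.derivative ℂ

/-- derivative zero implies constant -/
lemma eq_C_of_deriv_zero (f : PowerSeries ℂ) (h : D f = 0) :
    f = PowerSeries.C (PowerSeries.constantCoeff f) := by
  ext n
  cases n with
  | zero => simp [PowerSeries.coeff_zero_eq_constantCoeff]
  | succ n =>
    have h1 : PowerSeries.coeff n (D f) = 0 := by rw [h]; simp
    rw [PowerSeries.coeff_derivative] at h1
    have hne : ((n : ℂ) + 1) ≠ 0 := Nat.cast_add_one_ne_zero n
    have h2 : PowerSeries.coeff (n+1) f = 0 := by
      rcases mul_eq_zero.mp h1 with h' | h'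
      · exact_mod_cast h'
      · exact absurd h' hne
    simp [h2, PowerSeries.coeff_C]

/-- F times derivative of F^i -/
lemma mul_deriv_pow (F : PowerSeries ℂ) (i : ℕ) :
    F * D (F ^ i) = i • (F ^ i * D F) := by
  cases i with
  | zero => simp
  | succ m =>
    rw [Derivation.leibniz_pow]
    simp only [Nat.add_sub_cancel, smul_eq_mul]
    rw [pow_succ]
    ring

/-- Wronskian lemma for unit denominator -/
lemma wronskian_unit (g h : PowerSeries ℂ) (hh : PowerSeries.constantCoeff h ≠ 0)
    (hw : D g * h = g * D h) : ∃ c : ℂ, g = PowerSeries.C c * h := by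
  have hinv : h * h⁻¹ = 1 := PowerSeries.mul_inv_cancel h hh
  set w := g * h⁻¹ with hwdef
  have hg : g = w * h := by
    rw [hwdef, mul_assoc, mul_comm h⁻¹ h, hinv, mul_one]
  have hDg : D g = w * D h + h * D w := by
    rw [hg, Derivation.leibniz]; simp only [smul_eq_mul]; try ring
  have hdw : D w * (h * h) = 0 := by
    have h2 : D g * h - g * D h = D w * (h * h) := by
      rw [hDg, hg]; ring
    rw [hw, sub_self] at h2; exact h2.symm
  have hh0 : h ≠ 0 := fun h0 => hh (by simp [h0])
  have : D w = 0 := by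
    rcases mul_eq_zero.mp hdw with h' | h'
    · exact h'
    · exact absurd h' (mul_ne_zero hh0 hh0)
  refine ⟨PowerSeries.constantCoeff w, ?_⟩
  rw [hg]
  conv_lhs => rw [eq_C_of_deriv_zero w this]



lemma exists_factor (f : PowerSeries ℂ) (hf : f ≠ 0) :
    ∃ (k : ℕ) (g : PowerSeries ℂ), PowerSeries.constantCoeff g ≠ 0 ∧ f = X ^ k * g := by
  refine ⟨f.order.toNat,
    PowerSeries.divXPowOrder f, ?_,
    PowerSeries.X_pow_order_mul_divXPowOrder.symm⟩
  have : (PowerSeries.firstUnitCoeff hf : ℂ) ≠ 0 := Units.ne_zero _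
  exact this

lemma X_mul_deriv_X_pow_mul (g : PowerSeries ℂ) (k : ℕ) :
    X * PowerSeries.derivative ℂ (X ^ k * g) =
      X ^ k * ((k : ℂ⟦X⟧) * g + X * PowerSeries.derivative ℂ g) := by
  rw [Derivation.leibniz, Derivation.leibniz_pow]
  simp only [PowerSeries.derivative_X, smul_eq_mul, mul_one]
  cases k with
  | zero => simp
  | succ m =>
    simp only [Nat.add_sub_cancel, Nat.cast_add, Nat.cast_one]
    ring_nf

lemma wronskian (u v : PowerSeries ℂ) (hv : v ≠ 0)
    (hw : PowerSeries.derivative ℂ u * v = u * PowerSeries.derivative ℂ v) :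
    ∃ c : ℂ, u = PowerSeries.C c * v := by
  by_cases hu : u = 0
  · exact ⟨0, by simp [hu]⟩
  obtain ⟨a, g, hg0, hug⟩ := exists_factor u hu
  obtain ⟨b, h, hh0, hvh⟩ := exists_factor v hv
  set Dg := PowerSeries.derivative ℂ g
  set Dh := PowerSeries.derivative ℂ h
  have key : X ^ (a + b) * (((a : ℂ⟦X⟧) * g + X * Dg) * h) =
      X ^ (a + b) * (((b : ℂ⟦X⟧) * h + X * Dh) * g) := by
    have h1 : X * PowerSeries.derivative ℂ u * v = X * u * PowerSeries.derivative ℂ v := by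
      rw [mul_assoc, hw, mul_assoc]
    rw [hug, hvh] at h1
    calc X ^ (a + b) * (((a : ℂ⟦X⟧) * g + X * Dg) * h)
        = (X * PowerSeries.derivative ℂ (X ^ a * g)) * (X ^ b * h) := by
          rw [X_mul_deriv_X_pow_mul]; rw [pow_add]; ring
      _ = (X * (X ^ a * g)) * PowerSeries.derivative ℂ (X ^ b * h) := h1
      _ = X ^ (a + b) * (((b : ℂ⟦X⟧) * h + X * Dh) * g) := by
          have := X_mul_deriv_X_pow_mul h b
          rw [show X * (X ^ a * g) * PowerSeries.derivative ℂ (X ^ b * h)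
              = (X * PowerSeries.derivative ℂ (X ^ b * h)) * (X ^ a * g) by ring,
            this, pow_add]; ring
  have hcancel : ((a : ℂ⟦X⟧) * g + X * Dg) * h = ((b : ℂ⟦X⟧) * h + X * Dh) * g :=
    mul_left_cancel₀ (pow_ne_zero _ PowerSeries.X_ne_zero) key
  have hab : a = b := by
    have := congrArg (PowerSeries.constantCoeff) hcancel
    simp only [map_mul, map_add, PowerSeries.constantCoeff_X, zero_mul, add_zero,
      map_natCast] at this
    have hne : PowerSeries.constantCoeff g * PowerSeries.constantCoeff h ≠ 0 :=
      mul_ne_zero hg0 hh0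
    have h4 : ((a : ℂ) - b) * (PowerSeries.constantCoeff g * PowerSeries.constantCoeff h) = 0 := by
      linear_combination this
    rcases mul_eq_zero.mp h4 with h' | h'
    · have h5 : (a : ℂ) = b := sub_eq_zero.mp h'
      exact_mod_cast h5
    · exact absurd h' hne
  subst hab
  have hgh : Dg * h = g * Dh := by
    have h2 : X * (Dg * h) = X * (g * Dh) := by
      have := hcancel
      rw [show ((a : ℂ⟦X⟧) * g + X * Dg) * h = (a : ℂ⟦X⟧) * (g * h) + X * (Dg * h) by ring,
        show ((a : ℂ⟦X⟧) * h + X * Dh) * g = (a : ℂ⟦X⟧) * (g * h) + X * (g * Dh) by ring] at this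
      exact add_left_cancel this
    exact mul_left_cancel₀ PowerSeries.X_ne_zero h2
  obtain ⟨c, hc⟩ := wronskian_unit g h hh0 hgh
  exact ⟨c, by rw [hug, hvh, hc]; ring⟩


lemma mul_deriv_pow' (F : PowerSeries ℂ) (i : ℕ) :
    F * PowerSeries.derivative ℂ (F ^ i) =
      PowerSeries.C (i : ℂ) * (F ^ i * PowerSeries.derivative ℂ F) := by
  rw [mul_deriv_pow, map_natCast (PowerSeries.C), nsmul_eq_mul]


theorem harddir (F : PowerSeries ℂ) (hF : F ≠ 0)
    (P : Polynomial (Polynomial ℂ)) (hP : P ≠ 0)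
    (halg : Polynomial.eval₂ Polynomial.coeToPowerSeries.ringHom F P = 0)
    (A B : Polynomial ℂ) (hB : B ≠ 0)
    (hode : (B : PowerSeries ℂ) * (PowerSeries.derivative ℂ F) = (A : PowerSeries ℂ) * F) :
    (∃ t : ℕ, 1 ≤ t ∧ ∃ A B : Polynomial ℂ, B ≠ 0 ∧
        (B : PowerSeries ℂ) * F ^ t = (A : PowerSeries ℂ)) := by
  classical
  set ev : Polynomial (Polynomial ℂ) →+* PowerSeries ℂ :=
    Polynomial.eval₂RingHom Polynomial.coeToPowerSeries.ringHom F with hev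
  have hevC : ∀ p : Polynomial ℂ, ev (Polynomial.C p) = (p : PowerSeries ℂ) := by
    intro p; simp [hev]
  have hevX : ev Polynomial.X = F := by simp [hev]
  have hex : ∃ d : ℕ, ∃ Q : Polynomial (Polynomial ℂ), Q ≠ 0 ∧ ev Q = 0 ∧ Q.natDegree = d :=
    ⟨P.natDegree, P, hP, halg, rfl⟩
  obtain ⟨P₀, hP₀ne, hP₀ann, hP₀deg⟩ := Nat.find_spec hex
  have hmin : ∀ Q : Polynomial (Polynomial ℂ), Q ≠ 0 → ev Q = 0 →
      P₀.natDegree ≤ Q.natDegree := by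
    intro Q h1 h2
    rw [hP₀deg]
    by_contra hlt
    push_neg at hlt
    exact Nat.find_min hex hlt ⟨Q, h1, h2, rfl⟩
  set n := P₀.natDegree with hn
  -- n ≥ 1
  have hn1 : 1 ≤ n := by
    by_contra h
    push_neg at h
    interval_cases n
    · have h0 := Polynomial.eq_C_of_natDegree_eq_zero hn.symm
      rw [h0, hevC] at hP₀ann
      exact hP₀ne (by rw [h0, Polynomial.coe_eq_zero_iff.mp hP₀ann, map_zero])
  -- constant coefficient nonzero
  have hp0 : P₀.coeff 0 ≠ 0 := by
    intro h0
    have hfac : P₀.divX * Polynomial.X = P₀ := by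
      have := Polynomial.divX_mul_X_add P₀
      rwa [h0, map_zero, add_zero] at this
    have hR : P₀.divX ≠ 0 := by
      intro hz
      rw [← hfac, hz, zero_mul] at hP₀ne
      exact hP₀ne rfl
    have hann : ev P₀.divX * F = 0 := by
      rw [← hevX, ← map_mul, hfac, hP₀ann]
    have hannR : ev P₀.divX = 0 := by
      rcases mul_eq_zero.mp hann with h' | h'
      · exact h'
      · exact absurd h' hF
    have := hmin P₀.divX hR hannR
    rw [Polynomial.natDegree_divX_eq_natDegree_tsub_one] at this
    omega
  -- the derived annihilator Q
  set qf : ℕ → Polynomial ℂ := fun i =>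
    B * Polynomial.derivative (P₀.coeff i) + Polynomial.C (i : ℂ) * (A * P₀.coeff i) with hqf
  set Q : Polynomial (Polynomial ℂ) :=
    ∑ i ∈ Finset.range (n + 1), Polynomial.C (qf i) * Polynomial.X ^ i with hQ
  have hsum : ev P₀ = ∑ i ∈ Finset.range (n + 1),
      ((P₀.coeff i : PowerSeries ℂ)) * F ^ i := by
    rw [hev]
    simp only [Polynomial.coe_eval₂RingHom]
    rw [Polynomial.eval₂_eq_sum_range]
    rfl
  have hder : ∑ i ∈ Finset.range (n + 1),
      PowerSeries.derivative ℂ ((P₀.coeff i : PowerSeries ℂ) * F ^ i) = 0 := by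
    rw [← map_sum, ← hsum, hP₀ann, map_zero]
  have hQF : ev Q * F = 0 := by
    have hterm : ∀ i ∈ Finset.range (n + 1),
        (B : PowerSeries ℂ) * F *
          (PowerSeries.derivative ℂ ((P₀.coeff i : PowerSeries ℂ) * F ^ i)) =
        ((qf i : PowerSeries ℂ)) * F ^ i * F := by
      intro i _
      rw [Derivation.leibniz, smul_eq_mul, smul_eq_mul, PowerSeries.derivative_coe]
      have h1 := mul_deriv_pow' F i
      push_cast [hqf, Polynomial.coe_add, Polynomial.coe_mul, Polynomial.coe_C]
      linear_combination ((B : PowerSeries ℂ) * (P₀.coeff i : PowerSeries ℂ)) * h1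
        + (PowerSeries.C (i : ℂ) * (P₀.coeff i : PowerSeries ℂ) * F ^ i) * hode
    calc ev Q * F = ∑ i ∈ Finset.range (n + 1), (qf i : PowerSeries ℂ) * F ^ i * F := by
          rw [hQ, map_sum, Finset.sum_mul]
          refine Finset.sum_congr rfl fun i _ => ?_
          rw [map_mul, map_pow, hevC, hevX]
      _ = ∑ i ∈ Finset.range (n + 1), (B : PowerSeries ℂ) * F *
            (PowerSeries.derivative ℂ ((P₀.coeff i : PowerSeries ℂ) * F ^ i)) :=
          (Finset.sum_congr rfl hterm).symm
      _ = 0 := by rw [← Finset.mul_sum, hder, mul_zero]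
  have hQ0 : ev Q = 0 := by
    rcases mul_eq_zero.mp hQF with h' | h'
    · exact h'
    · exact absurd h' hF
  have hQdeg : Q.natDegree ≤ n := by
    rw [hQ]
    refine Polynomial.natDegree_sum_le_of_forall_le _ _ fun i hi => ?_
    refine le_trans (Polynomial.natDegree_mul_le) ?_
    simp only [Polynomial.natDegree_C, Polynomial.natDegree_X_pow, zero_add]
    exact Nat.lt_succ_iff.mp (Finset.mem_range.mp hi)
  have hQcoeff : ∀ j, j ≤ n → Q.coeff j = qf j := by
    intro j hj
    rw [hQ, Polynomial.finset_sum_coeff]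
    rw [Finset.sum_eq_single j]
    · simp [Polynomial.coeff_C_mul, Polynomial.coeff_X_pow]
    · intro i _ hne
      simp [Polynomial.coeff_C_mul, Polynomial.coeff_X_pow, (Ne.symm hne)]
    · intro h
      exact absurd (Finset.mem_range.mpr (by omega)) h
  set pn := P₀.coeff n with hpn_def
  have hpn : pn ≠ 0 := by
    rw [hpn_def, hn, ← Polynomial.leadingCoeff]
    exact Polynomial.leadingCoeff_ne_zero.mpr hP₀ne
  set S : Polynomial (Polynomial ℂ) := Polynomial.C pn * Q - Polynomial.C (qf n) * P₀ with hS
  have hSann : ev S = 0 := by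
    rw [hS, map_sub, map_mul, map_mul, hevC, hevC, hQ0, hP₀ann, mul_zero, mul_zero, sub_zero]
  have hS0 : S = 0 := by
    by_contra hSne
    have h1 := hmin S hSne hSann
    have h2 : S.natDegree ≤ n := by
      refine le_trans (Polynomial.natDegree_sub_le _ _) (max_le ?_ ?_)
      · exact le_trans (Polynomial.natDegree_C_mul_le _ _) hQdeg
      · exact le_trans (Polynomial.natDegree_C_mul_le _ _) le_rfl
    have h3 : S.coeff n = 0 := by
      rw [hS, Polynomial.coeff_sub, Polynomial.coeff_C_mul, Polynomial.coeff_C_mul,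
        hQcoeff n le_rfl, ← hpn_def, mul_comm, sub_self]
    have h4 : S.natDegree < n := by
      rcases lt_or_eq_of_le h2 with h' | h'
      · exact h'
      · exfalso
        have := Polynomial.leadingCoeff_ne_zero.mpr hSne
        rw [Polynomial.leadingCoeff, h', h3] at this
        exact this rfl
    omega
  -- the key polynomial identity
  have hdag : pn * (B * Polynomial.derivative (P₀.coeff 0)) = qf n * P₀.coeff 0 := by
    have := congrArg (fun p => Polynomial.coeff p 0) hS0
    simp only [hS, Polynomial.coeff_sub, Polynomial.coeff_C_mul, Polynomial.coeff_zero] at this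
    rw [hQcoeff 0 (by omega)] at this
    have hq0 : qf 0 = B * Polynomial.derivative (P₀.coeff 0) := by
      rw [hqf]
      simp
    rw [hq0] at this
    exact sub_eq_zero.mp this
  -- coerce the identity to power series
  have hdagPS : (pn : PowerSeries ℂ) * ((B : PowerSeries ℂ) *
        ((Polynomial.derivative (P₀.coeff 0) : Polynomial ℂ) : PowerSeries ℂ)) =
      ((B : PowerSeries ℂ) * ((Polynomial.derivative pn : Polynomial ℂ) : PowerSeries ℂ)
        + PowerSeries.C (n : ℂ) * ((A : PowerSeries ℂ) * (pn : PowerSeries ℂ)))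
        * (P₀.coeff 0 : PowerSeries ℂ) := by
    have h := congrArg (fun p : Polynomial ℂ => (p : PowerSeries ℂ)) hdag
    simp only [hqf, Polynomial.coe_mul, Polynomial.coe_add, Polynomial.coe_C] at h
    exact h
  -- Wronskian relation
  have hv : (P₀.coeff 0 : PowerSeries ℂ) ≠ 0 :=
    fun h => hp0 (Polynomial.coe_eq_zero_iff.mp h)
  have hBF : (B : PowerSeries ℂ) * F ≠ 0 :=
    mul_ne_zero (fun h => hB (Polynomial.coe_eq_zero_iff.mp h)) hF
  have hw : PowerSeries.derivative ℂ ((pn : PowerSeries ℂ) * F ^ n) * (P₀.coeff 0 : PowerSeries ℂ)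
      = ((pn : PowerSeries ℂ) * F ^ n) *
        PowerSeries.derivative ℂ ((P₀.coeff 0 : PowerSeries ℂ)) := by
    apply mul_right_cancel₀ hBF
    rw [Derivation.leibniz, smul_eq_mul, smul_eq_mul, PowerSeries.derivative_coe,
      PowerSeries.derivative_coe]
    have h1 := mul_deriv_pow' F n
    linear_combination ((pn : PowerSeries ℂ) * (P₀.coeff 0 : PowerSeries ℂ)
        * (B : PowerSeries ℂ)) * h1
      + (PowerSeries.C (n : ℂ) * (pn : PowerSeries ℂ) * (P₀.coeff 0 : PowerSeries ℂ) * F ^ n)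
        * hode
      - (F ^ n * F) * hdagPS
  obtain ⟨c, hc⟩ := wronskian _ _ hv hw
  exact ⟨n, hn1, Polynomial.C c * P₀.coeff 0, pn, hpn,
    by rw [hc, Polynomial.coe_mul, Polynomial.coe_C]⟩

end RRODE

open RRODE Polynomial in
theorem rootRational_iff_firstOrder_ODE (F : PowerSeries ℂ) (hF : F ≠ 0)
    (P : Polynomial (Polynomial ℂ)) (hP : P ≠ 0)
    (halg : Polynomial.eval₂ Polynomial.coeToPowerSeries.ringHom F P = 0) :
    (∃ t : ℕ, 1 ≤ t ∧ ∃ A B : Polynomial ℂ, B ≠ 0 ∧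
        (B : PowerSeries ℂ) * F ^ t = (A : PowerSeries ℂ)) ↔
    (∃ A B : Polynomial ℂ, B ≠ 0 ∧
        (B : PowerSeries ℂ) * (PowerSeries.derivative ℂ F) =
          (A : PowerSeries ℂ) * F) := by
  constructor
  · rintro ⟨t, ht, A, B, hB, hBF⟩
    have hBps : (B : PowerSeries ℂ) ≠ 0 := fun h => hB (Polynomial.coe_eq_zero_iff.mp h)
    have hAps : (A : PowerSeries ℂ) ≠ 0 := by
      rw [← hBF]; exact mul_ne_zero hBps (pow_ne_zero _ hF)
    have hApoly : A ≠ 0 := fun h => hAps (by rw [h, Polynomial.coe_zero])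
    refine ⟨Polynomial.derivative A * B - Polynomial.derivative B * A,
      Polynomial.C (t : ℂ) * (A * B), ?_, ?_⟩
    · exact mul_ne_zero (fun h => by
        simp only [Polynomial.C_eq_zero] at h
        exact (Nat.cast_ne_zero (R := ℂ)).mpr (by omega) h) (mul_ne_zero hApoly hB)
    · have hd : (B : PowerSeries ℂ) * PowerSeries.derivative ℂ (F ^ t)
          + F ^ t * ((Polynomial.derivative B : Polynomial ℂ) : PowerSeries ℂ)
          = ((Polynomial.derivative A : Polynomial ℂ) : PowerSeries ℂ) := by
        have h := congrArg (PowerSeries.derivative ℂ) hBF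
        rwa [Derivation.leibniz, smul_eq_mul, smul_eq_mul, PowerSeries.derivative_coe,
          PowerSeries.derivative_coe] at h
      have h1 := mul_deriv_pow' F t
      push_cast [Polynomial.coe_mul, Polynomial.coe_C, Polynomial.coe_sub]
      linear_combination ((B : PowerSeries ℂ) * F) * hd
        - ((B : PowerSeries ℂ) ^ 2) * h1
        - (PowerSeries.C (t : ℂ) * (B : PowerSeries ℂ) * PowerSeries.derivative ℂ F
            + ((Polynomial.derivative B : Polynomial ℂ) : PowerSeries ℂ) * F) * hBF
  · rintro ⟨A, B, hB, hode⟩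
    exact RRODE.harddir F hF P hP halg A B hB hode
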